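/- Let ρ be a composition (a finitely supported sequence of nonnegative integers). Then Σ_{0 ≤ α ≤ ρ} (-1)^{|α|}·2^{#(ρ-α) + #(α)} equals 1 if ρ = 0 and equals 0 if ρ ≠ 0, where the sum runs over all compositions α with α_i ≤ ρ_i for every i. (In particular, for a single integer s ≥ 0, Σ_{i=0}^s (-1)^i·2^{#(s-i) + #(i)} = δ_{s,0}.) -/
import Mathlib

/-!
Compositions are finitely supported sequences of nonnegative integers, `ℕ →₀ ℕ`.
For a composition `α`, `|α|` is the sum of its entries and `#(α)` is the number of
nonzero entries; for a single integer `a ≥ 0`, `#(a) = 1` if `a ≠ 0` and `0` otherwise.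
-/

open Finset

/-- `|α|`, the sum of the entries of a composition. -/
def csize (α : ℕ →₀ ℕ) : ℕ := α.sum fun _ n => n

/-- `#(α)`, the number of nonzero entries of a composition. -/
def csupp (α : ℕ →₀ ℕ) : ℕ := α.support.card

/-- `#(a)` for a single integer. -/
def nsupp (a : ℕ) : ℕ := if a = 0 then 0 else 1

lemma Iic_nat_eq_range (n : ℕ) : Finset.Iic n = Finset.range (n + 1) := by
  ext x; simp [Nat.lt_succ_iff]

lemma sum_neg_pow (s : ℕ) :
    (∑ i ∈ Finset.range (s + 1), (-1 : ℤ) ^ i * 2 ^ (nsupp i)) = (-1) ^ s := by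
  induction s with
  | zero => simp [nsupp]
  | succ n ih =>
      rw [Finset.sum_range_succ, ih]
      have : nsupp (n + 1) = 1 := by simp [nsupp]
      rw [this]
      ring

lemma scalar_case (s : ℕ) :
    (∑ i ∈ Finset.range (s + 1), (-1 : ℤ) ^ i * 2 ^ (nsupp (s - i) + nsupp i)) =
      if s = 0 then 1 else 0 := by
  cases s with
  | zero => simp [nsupp]
  | succ n =>
      rw [Finset.sum_range_succ]
      have h1 : nsupp (n + 1 - (n + 1)) = 0 := by simp [nsupp]
      have h2 : nsupp (n + 1) = 1 := by simp [nsupp]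
      have h3 : ∀ i ∈ Finset.range (n + 1),
          (-1 : ℤ) ^ i * 2 ^ (nsupp (n + 1 - i) + nsupp i)
            = 2 * ((-1 : ℤ) ^ i * 2 ^ (nsupp i)) := by
        intro i hi
        rw [Finset.mem_range] at hi
        have : nsupp (n + 1 - i) = 1 := by
          have : n + 1 - i ≠ 0 := by omega
          simp [nsupp, this]
        rw [this, pow_add]
        ring
      rw [Finset.sum_congr rfl h3, ← Finset.mul_sum, sum_neg_pow, h1, h2]
      simp only [Nat.succ_ne_zero, if_false]
      ring

lemma Iic_finsupp (ρ : ℕ →₀ ℕ) :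
    Finset.Iic ρ = ρ.support.finsupp (fun i => Finset.Iic (ρ i)) := by
  ext α
  rw [Finset.mem_finsupp_iff, Finset.mem_Iic]
  constructor
  · intro h
    refine ⟨fun i hi => ?_, fun i _ => Finset.mem_Iic.2 (h i)⟩
    rw [Finsupp.mem_support_iff] at hi ⊢
    have := h i
    omega
  · intro ⟨hsub, hval⟩ i
    by_cases hi : i ∈ ρ.support
    · exact Finset.mem_Iic.1 (hval i hi)
    · have hαi : α i = 0 := by
        by_contra h
        exact hi (hsub (Finsupp.mem_support_iff.2 h))
      simp [hαi]

lemma sum_Iic_prod (ρ : ℕ →₀ ℕ) (g : ℕ → ℕ → ℤ) :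
    (∑ α ∈ Finset.Iic ρ, ∏ i ∈ ρ.support, g i (α i)) =
      ∏ i ∈ ρ.support, ∑ a ∈ Finset.Iic (ρ i), g i a := by
  classical
  rw [Iic_finsupp, Finset.finsupp, Finset.sum_map, Finset.prod_sum]
  refine Finset.sum_congr ?_ fun p hp => ?_
  · congr 1
    exact Subsingleton.elim _ _
  · simp only [Function.Embedding.coeFn_mk]
    rw [← Finset.prod_attach ρ.support (fun i => g i (Finsupp.indicator ρ.support p i))]
    exact Finset.prod_congr rfl fun x _ => by
      rw [Finsupp.indicator_of_mem x.2]

lemma summand_eq (ρ α : ℕ →₀ ℕ) (hα : α ∈ Finset.Iic ρ) :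
    (-1 : ℤ) ^ csize α * 2 ^ (csupp (ρ - α) + csupp α) =
      ∏ i ∈ ρ.support, ((-1 : ℤ) ^ (α i) * 2 ^ (nsupp (ρ i - α i) + nsupp (α i))) := by
  classical
  rw [Finset.mem_Iic] at hα
  have hle : ∀ i, α i ≤ ρ i := fun i => hα i
  have hsub : α.support ⊆ ρ.support := by
    intro i hi
    rw [Finsupp.mem_support_iff] at hi ⊢
    have := hle i
    omega
  have hsub' : (ρ - α).support ⊆ ρ.support := by
    intro i hi
    rw [Finsupp.mem_support_iff] at hi ⊢
    rw [Finsupp.tsub_apply] at hi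
    omega
  have hsize : csize α = ∑ i ∈ ρ.support, α i := by
    rw [csize, Finsupp.sum]
    exact Finset.sum_subset hsub (fun i _ hi => by
      rwa [Finsupp.notMem_support_iff] at hi)
  have hsupp : ∀ (β : ℕ →₀ ℕ), β.support ⊆ ρ.support →
      csupp β = ∑ i ∈ ρ.support, nsupp (β i) := by
    intro β hβ
    rw [csupp, Finset.card_eq_sum_ones]
    have h1 : ∑ i ∈ β.support, (1 : ℕ) = ∑ i ∈ β.support, nsupp (β i) :=
      Finset.sum_congr rfl fun i hi => by
        simp [nsupp, Finsupp.mem_support_iff.1 hi]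
    rw [h1]
    exact Finset.sum_subset hβ fun i _ hi => by
      simp [nsupp, Finsupp.notMem_support_iff.1 hi]
  rw [hsize, hsupp _ hsub, hsupp _ hsub']
  rw [Finset.prod_mul_distrib, ← Finset.prod_pow_eq_pow_sum]
  congr 1
  rw [← Finset.sum_add_distrib, ← Finset.prod_pow_eq_pow_sum]
  refine Finset.prod_congr rfl fun i _ => ?_
  rw [Finsupp.tsub_apply]

theorem statement13 :
    (∀ ρ : ℕ →₀ ℕ,
      (∑ α ∈ Finset.Iic ρ, (-1 : ℤ) ^ csize α * 2 ^ (csupp (ρ - α) + csupp α)) =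
        if ρ = 0 then 1 else 0) ∧
    (∀ s : ℕ,
      (∑ i ∈ Finset.range (s + 1), (-1 : ℤ) ^ i * 2 ^ (nsupp (s - i) + nsupp i)) =
        if s = 0 then 1 else 0) := by
  constructor
  · intro ρ
    rw [Finset.sum_congr rfl (summand_eq ρ),
      sum_Iic_prod ρ (fun i a => (-1 : ℤ) ^ a * 2 ^ (nsupp (ρ i - a) + nsupp a))]
    have hfac : ∀ i ∈ ρ.support,
        (∑ a ∈ Finset.Iic (ρ i), (-1 : ℤ) ^ a * 2 ^ (nsupp (ρ i - a) + nsupp a)) = 0 := by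
      intro i hi
      rw [Finsupp.mem_support_iff] at hi
      rw [Iic_nat_eq_range, scalar_case, if_neg hi]
    by_cases hρ : ρ = 0
    · subst hρ; simp
    · rw [if_neg hρ]
      obtain ⟨i, hi⟩ := Finsupp.support_nonempty_iff.2 hρ
      exact Finset.prod_eq_zero hi (hfac i hi)
  · exact scalar_case
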